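/- Define f₀ : [0,∞) → ℝ by f₀(t) = √t (1/2 + sin(1/t)) for t > 0 and f₀(0) = 0, and F₀(s) = ∫₀ˢ f₀(t) dt. Then F₀ satisfies: F₀(0) = 0; liminf_{s→0⁺} F₀(s)/s² > −∞; limsup_{s→0⁺} F₀(s)/s² = +∞; and liminf_{s→0⁺} f₀(s)/s < 0. -/

import Mathlib

open Filter Topology intervalIntegral

noncomputable def gg (t : ℝ) : ℝ := t ^ 2 * Real.sqrt t * Real.cos t⁻¹
noncomputable def hh (t : ℝ) : ℝ :=
  5 / 2 * (t * Real.sqrt t) * Real.cos t⁻¹ + Real.sqrt t * Real.sin t⁻¹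

lemma hderiv_pos {t : ℝ} (ht : 0 < t) : HasDerivAt gg (hh t) t := by
  have h1 : HasDerivAt (fun t : ℝ => t ^ 2 * Real.sqrt t)
      (2 * t ^ 1 * Real.sqrt t + t ^ 2 * (1 / (2 * Real.sqrt t))) t := by
    simpa using (hasDerivAt_pow 2 t).fun_mul (Real.hasDerivAt_sqrt ht.ne')
  have h2 : HasDerivAt (fun t : ℝ => Real.cos t⁻¹)
      (-Real.sin t⁻¹ * -(t ^ 2)⁻¹) t :=
    (Real.hasDerivAt_cos t⁻¹).comp t (hasDerivAt_inv ht.ne')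
  have : HasDerivAt gg _ t := h1.fun_mul h2
  convert this using 1
  have hs : Real.sqrt t ≠ 0 := by positivity
  have h3 : Real.sqrt t * Real.sqrt t = t := Real.mul_self_sqrt ht.le
  unfold hh
  field_simp
  linear_combination (t * Real.cos (1 / t)) * h3

lemma sqrt_le_sqrt_abs (t : ℝ) : Real.sqrt t ≤ Real.sqrt |t| :=
  Real.sqrt_le_sqrt (le_abs_self t)

lemma tend_aux : Tendsto (fun t : ℝ => |t| * Real.sqrt |t|) (𝓝 0) (𝓝 0) := by
  have : Continuous fun t : ℝ => |t| * Real.sqrt |t| :=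
    continuous_abs.mul (Real.continuous_sqrt.comp continuous_abs)
  simpa using this.tendsto 0

lemma hderiv_zero : HasDerivAt gg (hh 0) 0 := by
  have h0 : hh 0 = 0 := by simp [hh]
  rw [h0, hasDerivAt_iff_tendsto_slope]
  apply squeeze_zero_norm (a := fun t : ℝ => |t| * Real.sqrt |t|)
  · intro t
    rcases eq_or_ne t 0 with rfl | ht
    · simp [slope]
      try positivity
    · have : slope gg 0 t = t * Real.sqrt t * Real.cos t⁻¹ := by
        simp only [slope, gg, vsub_eq_sub, smul_eq_mul]
        field_simp
        ring
      rw [this]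
      calc ‖t * Real.sqrt t * Real.cos t⁻¹‖ ≤ ‖t * Real.sqrt t‖ * 1 := by
            rw [norm_mul]
            gcongr
            exact Real.abs_cos_le_one _
        _ ≤ |t| * Real.sqrt |t| := by
            rw [mul_one, norm_mul, Real.norm_eq_abs, Real.norm_eq_abs,
              abs_of_nonneg (Real.sqrt_nonneg t)]
            gcongr
            exact le_abs_self t
  · exact tend_aux.mono_left nhdsWithin_le_nhds

lemma hderiv (t : ℝ) (ht : 0 ≤ t) : HasDerivAt gg (hh t) t := by
  rcases ht.eq_or_lt with rfl | ht
  · exact hderiv_zero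
  · exact hderiv_pos ht

noncomputable def pp (t : ℝ) : ℝ :=
  1 / 2 * Real.sqrt t - 5 / 2 * (t * Real.sqrt t) * Real.cos t⁻¹

lemma cont_hh : Continuous hh := by
  rw [continuous_iff_continuousAt]
  intro t
  rcases eq_or_ne t 0 with rfl | ht
  · rw [ContinuousAt]
    have h0 : hh 0 = 0 := by simp [hh]
    rw [h0]
    apply squeeze_zero_norm (a := fun t : ℝ => 5 / 2 * (|t| * Real.sqrt |t|) + Real.sqrt |t|)
    · intro t
      have h1 : ‖hh t‖ ≤ 5 / 2 * ‖t * Real.sqrt t‖ * ‖Real.cos t⁻¹‖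
          + ‖Real.sqrt t‖ * ‖Real.sin t⁻¹‖ := by
        unfold hh
        calc ‖5 / 2 * (t * Real.sqrt t) * Real.cos t⁻¹ + Real.sqrt t * Real.sin t⁻¹‖
            ≤ ‖5 / 2 * (t * Real.sqrt t) * Real.cos t⁻¹‖ + ‖Real.sqrt t * Real.sin t⁻¹‖ :=
              norm_add_le _ _
          _ = 5 / 2 * ‖t * Real.sqrt t‖ * ‖Real.cos t⁻¹‖ + ‖Real.sqrt t‖ * ‖Real.sin t⁻¹‖ := by
              simp [norm_mul, abs_of_nonneg]; try ring
      refine h1.trans ?_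
      have hc : ‖Real.cos t⁻¹‖ ≤ 1 := Real.abs_cos_le_one _
      have hs : ‖Real.sin t⁻¹‖ ≤ 1 := Real.abs_sin_le_one _
      have h2 : ‖t * Real.sqrt t‖ ≤ |t| * Real.sqrt |t| := by
        rw [norm_mul, Real.norm_eq_abs, Real.norm_eq_abs, abs_of_nonneg (Real.sqrt_nonneg t)]
        gcongr
        · exact le_abs_self t
      have h3 : ‖Real.sqrt t‖ ≤ Real.sqrt |t| := by
        rw [Real.norm_eq_abs, abs_of_nonneg (Real.sqrt_nonneg t)]
        exact sqrt_le_sqrt_abs t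
      have hn1 : ‖t * Real.sqrt t‖ ≥ 0 := norm_nonneg _
      nlinarith [norm_nonneg (Real.sqrt t), norm_nonneg (Real.cos t⁻¹), norm_nonneg (Real.sin t⁻¹)]
    · have : Tendsto (fun t : ℝ => 5 / 2 * (|t| * Real.sqrt |t|) + Real.sqrt |t|) (𝓝 0) (𝓝 0) := by
        have hc : Continuous fun t : ℝ => 5 / 2 * (|t| * Real.sqrt |t|) + Real.sqrt |t| := by
          continuity
        simpa using hc.tendsto 0
      exact this
  · have h1 : ContinuousAt (fun t : ℝ => Real.cos t⁻¹) t :=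
      Real.continuous_cos.continuousAt.comp (continuousAt_inv₀ ht)
    have h2 : ContinuousAt (fun t : ℝ => Real.sin t⁻¹) t :=
      Real.continuous_sin.continuousAt.comp (continuousAt_inv₀ ht)
    exact ((continuousAt_const.mul (continuousAt_id.mul
      Real.continuous_sqrt.continuousAt)).mul h1).add
      (Real.continuous_sqrt.continuousAt.mul h2)

lemma cont_pp : Continuous pp := by
  rw [continuous_iff_continuousAt]
  intro t
  rcases eq_or_ne t 0 with rfl | ht
  · rw [ContinuousAt]
    have h0 : pp 0 = 0 := by simp [pp]
    rw [h0]
    apply squeeze_zero_norm (a := fun t : ℝ => 1 / 2 * Real.sqrt |t| + 5 / 2 * (|t| * Real.sqrt |t|))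
    · intro t
      have hc : ‖Real.cos t⁻¹‖ ≤ 1 := Real.abs_cos_le_one _
      have h2 : ‖t * Real.sqrt t‖ ≤ |t| * Real.sqrt |t| := by
        rw [norm_mul, Real.norm_eq_abs, Real.norm_eq_abs, abs_of_nonneg (Real.sqrt_nonneg t)]
        gcongr
        · exact le_abs_self t
      have h3 : ‖Real.sqrt t‖ ≤ Real.sqrt |t| := by
        rw [Real.norm_eq_abs, abs_of_nonneg (Real.sqrt_nonneg t)]
        exact sqrt_le_sqrt_abs t
      calc ‖pp t‖ ≤ ‖1 / 2 * Real.sqrt t‖ + ‖5 / 2 * (t * Real.sqrt t) * Real.cos t⁻¹‖ :=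
            norm_sub_le _ _
        _ = 1 / 2 * ‖Real.sqrt t‖ + 5 / 2 * ‖t * Real.sqrt t‖ * ‖Real.cos t⁻¹‖ := by
            simp [norm_mul]; try ring
        _ ≤ 1 / 2 * Real.sqrt |t| + 5 / 2 * (|t| * Real.sqrt |t|) := by
            nlinarith [norm_nonneg (t * Real.sqrt t), norm_nonneg (Real.cos t⁻¹)]
    · have hc : Continuous fun t : ℝ => 1 / 2 * Real.sqrt |t| + 5 / 2 * (|t| * Real.sqrt |t|) := by
        continuity
      simpa using hc.tendsto 0
  · have h1 : ContinuousAt (fun t : ℝ => Real.cos t⁻¹) t :=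
      Real.continuous_cos.continuousAt.comp (continuousAt_inv₀ ht)
    exact (continuousAt_const.mul Real.continuous_sqrt.continuousAt).sub
      ((continuousAt_const.mul (continuousAt_id.mul Real.continuous_sqrt.continuousAt)).mul h1)

lemma sqrt_int (s : ℝ) (hs : 0 < s) :
    ∫ t in (0:ℝ)..s, Real.sqrt t = 2 / 3 * (s * Real.sqrt s) := by
  simp only [Real.sqrt_eq_rpow]
  rw [integral_rpow (Or.inl (by norm_num))]
  rw [Real.zero_rpow (by norm_num), Real.rpow_add hs, Real.rpow_one, ← Real.sqrt_eq_rpow]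
  ring

lemma key (s : ℝ) (hs : 0 < s) :
    (∫ t in (0:ℝ)..s, (hh t + pp t)) ≥
      -(s ^ 2 * Real.sqrt s) + (1 / 2 - 5 / 2 * s) * (2 / 3 * (s * Real.sqrt s)) := by
  have hint_h : IntervalIntegrable hh MeasureTheory.volume 0 s :=
    cont_hh.intervalIntegrable _ _
  have hint_p : IntervalIntegrable pp MeasureTheory.volume 0 s :=
    cont_pp.intervalIntegrable _ _
  rw [integral_add hint_h hint_p]
  have hFTC : ∫ t in (0:ℝ)..s, hh t = gg s - gg 0 := by
    apply integral_eq_sub_of_hasDerivAt (fun t htt => hderiv t ?_) hint_h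
    rw [Set.uIcc_of_le hs.le] at htt
    exact htt.1
  have hgg0 : gg 0 = 0 := by simp [gg]
  have hggs : gg s ≥ -(s ^ 2 * Real.sqrt s) := by
    have h1 : Real.cos s⁻¹ ≥ -1 := Real.neg_one_le_cos _
    have h2 : (0:ℝ) ≤ s ^ 2 * Real.sqrt s := by positivity
    unfold gg
    nlinarith
  have hmono : (∫ t in (0:ℝ)..s, pp t) ≥ ∫ t in (0:ℝ)..s, (1 / 2 - 5 / 2 * s) * Real.sqrt t := by
    apply integral_mono_on hs.le _ hint_p
    · intro t ht
      have h1 : Real.cos t⁻¹ ≤ 1 := Real.cos_le_one _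
      have h2 : Real.cos t⁻¹ ≥ -1 := Real.neg_one_le_cos _
      have h3 : 0 ≤ Real.sqrt t := Real.sqrt_nonneg t
      unfold pp
      nlinarith [mul_nonneg (sub_nonneg.2 ht.2) h3,
        mul_nonneg (mul_nonneg ht.1 h3) (sub_nonneg.2 h1)]
    · exact (continuous_const.mul Real.continuous_sqrt).intervalIntegrable _ _
  rw [integral_const_mul, sqrt_int s hs] at hmono
  rw [hFTC, hgg0]
  have := hggs
  linarith

lemma keybound (f₀ F₀ : ℝ → ℝ)
    (hf₀ : ∀ t : ℝ, f₀ t = if t = 0 then 0 else Real.sqrt t * (1 / 2 + Real.sin t⁻¹))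
    (hF₀ : ∀ s : ℝ, F₀ s = ∫ t in (0 : ℝ)..s, f₀ t)
    (s : ℝ) (hs : 0 < s) (hs1 : s ≤ 1 / 10) :
    1 / 15 * (Real.sqrt s)⁻¹ ≤ F₀ s / s ^ 2 := by
  have hfe : ∀ t : ℝ, f₀ t = hh t + pp t := by
    intro t
    rw [hf₀]
    split_ifs with h
    · subst h; simp [hh, pp]
    · unfold hh pp; ring
  have hFe : F₀ s = ∫ t in (0:ℝ)..s, (hh t + pp t) := by
    rw [hF₀]
    congr 1
    ext t
    exact hfe t
  have hk := key s hs
  rw [← hFe] at hk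
  have hr : 0 < Real.sqrt s := Real.sqrt_pos.2 hs
  have hr2 : Real.sqrt s * Real.sqrt s = s := Real.mul_self_sqrt hs.le
  have hF : F₀ s ≥ 1 / 15 * (s * Real.sqrt s) := by
    nlinarith [mul_pos hs hr]
  rw [le_div_iff₀ (by positivity : (0:ℝ) < s ^ 2)]
  have : 1 / 15 * (Real.sqrt s)⁻¹ * s ^ 2 = 1 / 15 * (s * Real.sqrt s) := by
    field_simp
    nlinarith
  linarith [this ▸ hF]

theorem stmt17 (f₀ F₀ : ℝ → ℝ)
    (hf₀ : ∀ t : ℝ, f₀ t = if t = 0 then 0 else Real.sqrt t * (1 / 2 + Real.sin t⁻¹))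
    (hF₀ : ∀ s : ℝ, F₀ s = ∫ t in (0 : ℝ)..s, f₀ t) :
    F₀ 0 = 0 ∧
    Filter.liminf (fun s => ((F₀ s / s ^ 2 : ℝ) : EReal)) (𝓝[>] (0 : ℝ)) ≠ ⊥ ∧
    Filter.limsup (fun s => ((F₀ s / s ^ 2 : ℝ) : EReal)) (𝓝[>] (0 : ℝ)) = ⊤ ∧
    Filter.liminf (fun s => ((f₀ s / s : ℝ) : EReal)) (𝓝[>] (0 : ℝ)) < 0 := by
  have hzero : F₀ 0 = 0 := by rw [hF₀]; simp
  -- the real-valued quotient tends to +infinity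
  have hsqrt : Tendsto (fun s : ℝ => Real.sqrt s) (𝓝[>] (0:ℝ)) (𝓝[>] (0:ℝ)) := by
    apply tendsto_nhdsWithin_of_tendsto_nhds_of_eventually_within
    · exact (Real.continuous_sqrt.tendsto' 0 0 (by simp)).mono_left nhdsWithin_le_nhds
    · filter_upwards [self_mem_nhdsWithin] with s hs
      exact Real.sqrt_pos.2 hs
  have hinv : Tendsto (fun s : ℝ => (Real.sqrt s)⁻¹) (𝓝[>] (0:ℝ)) atTop :=
    tendsto_inv_nhdsGT_zero.comp hsqrt
  have hconst : Tendsto (fun s : ℝ => 1 / 15 * (Real.sqrt s)⁻¹) (𝓝[>] (0:ℝ)) atTop :=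
    Tendsto.const_mul_atTop (show (0:ℝ) < 1/15 by norm_num) hinv
  have hreal : Tendsto (fun s : ℝ => F₀ s / s ^ 2) (𝓝[>] (0:ℝ)) atTop := by
    refine tendsto_atTop_mono' _ ?_ hconst
    filter_upwards [Ioo_mem_nhdsGT_of_mem (show (0:ℝ) ∈ Set.Ico (0:ℝ) (1/10) from ⟨le_refl _, by norm_num⟩)]
      with s hs
    exact keybound f₀ F₀ hf₀ hF₀ s hs.1 hs.2.le
  have htop : Tendsto (fun s : ℝ => ((F₀ s / s ^ 2 : ℝ) : EReal)) (𝓝[>] (0:ℝ)) (𝓝 ⊤) := by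
    rw [EReal.tendsto_nhds_top_iff_real]
    intro x
    filter_upwards [hreal.eventually_gt_atTop x] with s hs
    exact_mod_cast hs
  refine ⟨hzero, ?_, ?_, ?_⟩
  · rw [htop.liminf_eq]
    simp
  · exact htop.limsup_eq
  · -- liminf of f₀ s / s is negative
    set x : ℕ → ℝ := fun k => (((k:ℝ) + 1) * (2 * Real.pi) - Real.pi / 2)⁻¹ with hxdef
    have hpi := Real.pi_gt_three
    have hd1 : ∀ k : ℕ, 1 ≤ ((k:ℝ) + 1) * (2 * Real.pi) - Real.pi / 2 := by
      intro k
      have hk : (0:ℝ) ≤ (k:ℝ) := Nat.cast_nonneg k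
      nlinarith
    have hxpos : ∀ k, 0 < x k := fun k => inv_pos.2 (by linarith [hd1 k])
    have hxle : ∀ k, x k ≤ 1 := fun k => inv_le_one_of_one_le₀ (hd1 k)
    have hdtop : Tendsto (fun k : ℕ => ((k:ℝ) + 1) * (2 * Real.pi) - Real.pi / 2) atTop atTop := by
      apply tendsto_atTop_mono _ tendsto_natCast_atTop_atTop
      intro k
      have hk : (0:ℝ) ≤ (k:ℝ) := Nat.cast_nonneg k
      nlinarith
    have hx : Tendsto x atTop (𝓝[>] (0:ℝ)) := by
      apply tendsto_nhdsWithin_of_tendsto_nhds_of_eventually_within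
      · exact tendsto_inv_atTop_zero.comp hdtop
      · exact Eventually.of_forall hxpos
    have hval : ∀ k : ℕ, f₀ (x k) / x k ≤ -1/2 := by
      intro k
      have hxk := hxpos k
      have hsin : Real.sin (x k)⁻¹ = -1 := by
        rw [hxdef]
        simp only [inv_inv]
        have : ((k:ℝ) + 1) * (2 * Real.pi) - Real.pi / 2
            = -(Real.pi / 2) + (↑(k + 1) : ℝ) * (2 * Real.pi) := by push_cast; ring
        rw [this, Real.sin_add_nat_mul_two_pi, Real.sin_neg, Real.sin_pi_div_two]
      rw [hf₀, if_neg hxk.ne', hsin]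
      have hr : 0 < Real.sqrt (x k) := Real.sqrt_pos.2 hxk
      have hr2 : Real.sqrt (x k) * Real.sqrt (x k) = x k := Real.mul_self_sqrt hxk.le
      have hrle : Real.sqrt (x k) ≤ 1 := by
        rw [show (1:ℝ) = Real.sqrt 1 by simp]
        exact Real.sqrt_le_sqrt (hxle k)
      rw [div_le_iff₀ hxk]
      nlinarith
    have hfreq : ∃ᶠ s in 𝓝[>] (0:ℝ), ((f₀ s / s : ℝ) : EReal) ≤ ((-1/2 : ℝ) : EReal) := by
      apply hx.frequently
      apply Frequently.of_forall
      intro k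
      exact_mod_cast EReal.coe_le_coe_iff.2 (hval k)
    calc Filter.liminf (fun s => ((f₀ s / s : ℝ) : EReal)) (𝓝[>] (0:ℝ))
        ≤ ((-1/2 : ℝ) : EReal) := liminf_le_of_frequently_le' hfreq
      _ < 0 := by
          rw [show (0:EReal) = ((0:ℝ):EReal) by simp]
          exact_mod_cast (by norm_num : (-1/2:ℝ) < 0)
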